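/- Let n be a positive integer coprime to the prime power q, let w be the smallest positive integer with q^w ≡ 1 (mod rad(n)), and let σ be the Frobenius α ↦ α^q on F_{q^w}. If f(x) is a monic irreducible factor of Φ_n(x) over F_{q^w} whose coefficients do not all lie in any proper subfield of F_{q^w} containing F_q, and w is prime, then the product f(x)·f^σ(x)·f^{σ^2}(x)···f^{σ^{w-1}}(x) has all its coefficients in F_q and is irreducible over F_q. -/

import Mathlib

open Polynomial

theorem stmt_7 {F K : Type*} [Field F] [Field K] [Fintype F] [Fintype K]
    [Algebra F K] (q n w : ℕ)
    (hq : IsPrimePow q) (hF : Fintype.card F = q) (hK : Fintype.card K = q ^ w)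
    (hn : 0 < n) (hcop : Nat.Coprime n q) (hwp : w.Prime)
    (hw2 : q ^ w ≡ 1 [MOD n.primeFactors.prod id])
    (hwmin : ∀ k : ℕ, 0 < k → q ^ k ≡ 1 [MOD n.primeFactors.prod id] → w ≤ k)
    (σ : K →+* K) (hσ : ∀ x : K, σ x = x ^ q)
    (f : K[X]) (hf : f.Monic) (hirr : Irreducible f)
    (hdvd : f ∣ cyclotomic n K)
    (hnotsub : ∀ S : Subfield K, S ≠ ⊤ → Set.range (algebraMap F K) ⊆ (S : Set K) →
      ¬ (∀ i : ℕ, f.coeff i ∈ S)) :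
    ∃ g : F[X],
      g.map (algebraMap F K) = ∏ k ∈ Finset.range w, (fun p : K[X] => p.map σ)^[k] f ∧
      Irreducible g := by
  classical
  have hq2 : 2 ≤ q := hq.two_le
  have hw1 : 1 < w := hwp.one_lt
  set A : F →+* K := algebraMap F K with hAdef
  have halg : ∀ y : F, A y ^ q = A y := fun y => by
    rw [← map_pow, ← hF, FiniteField.pow_card]
  have hpow : ∀ (k : ℕ) (x : K), (σ ^ k) x = x ^ q ^ k := by
    intro k
    induction k with
    | zero => intro x; simp
    | succ k ih =>
      intro x
      rw [pow_succ σ, RingHom.mul_def, RingHom.comp_apply, hσ, ih, ← pow_mul, ← pow_succ']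
  have hσw : (σ ^ w) = (1 : K →+* K) := by
    ext x
    rw [hpow, ← hK, FiniteField.pow_card, RingHom.one_def, RingHom.id_apply]
  have hmod : ∀ a : ℕ, (σ ^ a) = σ ^ (a % w) := by
    intro a
    conv_lhs => rw [← Nat.div_add_mod a w]
    rw [pow_add, pow_mul, hσw, one_pow, one_mul]
  have hAcomp : ∀ k : ℕ, (σ ^ k).comp A = A := by
    intro k; ext y
    rw [RingHom.comp_apply, hpow, ← map_pow, ← hF, FiniteField.pow_card_pow]
  -- every element fixed by x ↦ x^q is in the image of F
  have hcoefffix : ∀ c : K, c ^ q = c → c ∈ Set.range A := by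
    intro c hc
    set h : K[X] := X ^ q - X with hh
    have hhne : h ≠ 0 := by
      have h1 : h.coeff q = 1 := by
        rw [hh, coeff_sub, coeff_X_pow, if_pos rfl, coeff_X, if_neg (by omega : ¬ (1 = q)),
          sub_zero]
      intro h0; rw [h0] at h1; simp at h1
    have hdeg : h.natDegree ≤ q := by
      refine le_trans (natDegree_sub_le _ _) ?_
      simp only [natDegree_X_pow, natDegree_X]
      omega
    have hroot : ∀ x : K, x ^ q = x → x ∈ h.roots := by
      intro x hx
      rw [mem_roots hhne]
      simp [hh, IsRoot, hx]
    set I : Finset K := Finset.univ.image A with hI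
    have hIcard : I.card = q := by
      rw [hI, Finset.card_image_of_injective _ A.injective, Finset.card_univ, hF]
    have hsub : I ⊆ h.roots.toFinset := by
      intro x hx
      rw [hI, Finset.mem_image] at hx
      obtain ⟨y, -, rfl⟩ := hx
      exact Multiset.mem_toFinset.mpr (hroot _ (halg y))
    have hcard2 : h.roots.toFinset.card ≤ q :=
      le_trans (Multiset.toFinset_card_le _) (le_trans (card_roots' h) hdeg)
    have hIT : I = h.roots.toFinset :=
      Finset.eq_of_subset_of_card_le hsub (by omega)
    have hcmem : c ∈ I := by
      rw [hIT]; exact Multiset.mem_toFinset.mpr (hroot c hc)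
    rw [hI, Finset.mem_image] at hcmem
    obtain ⟨y, -, hy⟩ := hcmem
    exact ⟨y, hy⟩
  -- the image of F is a proper subfield
  have hSne : A.fieldRange ≠ (⊤ : Subfield K) := by
    intro htop
    have hsurj : Function.Surjective A := by
      intro x
      have hx : x ∈ A.fieldRange := htop ▸ Subfield.mem_top x
      exact RingHom.mem_fieldRange.mp hx
    have hle := Fintype.card_le_of_surjective A hsurj
    rw [hF, hK] at hle
    have hlt : q ^ 1 < q ^ w := Nat.pow_lt_pow_right (by omega) hw1
    rw [pow_one] at hlt
    omega
  -- f is not fixed by any σ^d with 0 < d < w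
  have hfixf : ∀ d : ℕ, 0 < d → d < w → f.map (σ ^ d) = f → False := by
    intro d hd0 hdw hfd
    have hcoef : ∀ i, (σ ^ d) (f.coeff i) = f.coeff i := by
      intro i
      conv_rhs => rw [← hfd]
      rw [coeff_map]
    have hcop' : Nat.Coprime d w :=
      (Nat.coprime_comm.mp ((Nat.Prime.coprime_iff_not_dvd hwp).mpr
        (Nat.not_dvd_of_pos_of_lt hd0 hdw)))
    obtain ⟨m, -, hm⟩ := Nat.exists_mul_mod_eq_one_of_coprime hcop' hw1
    have hit : ∀ (c : K), (σ ^ d) c = c → ∀ m : ℕ, ((σ ^ d) ^ m) c = c := by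
      intro c hc m
      induction m with
      | zero => simp
      | succ m ih => rw [pow_succ, RingHom.mul_def, RingHom.comp_apply, hc, ih]
    have h1 : σ ^ (d * m) = σ := by rw [hmod, hm, pow_one]
    have hfix2 : ∀ i, σ (f.coeff i) = f.coeff i := by
      intro i
      rw [← h1, pow_mul]
      exact hit _ (hcoef i) m
    refine hnotsub A.fieldRange hSne (by rw [RingHom.coe_fieldRange]) ?_
    intro i
    rw [RingHom.mem_fieldRange]
    obtain ⟨y, hy⟩ := hcoefffix (f.coeff i) (by rw [← hσ]; exact hfix2 i)
    exact ⟨y, hy⟩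
  -- conjugates are pairwise distinct
  have hne : ∀ i < w, ∀ j < w, i ≠ j → f.map (σ ^ i) ≠ f.map (σ ^ j) := by
    have H : ∀ i j, i < j → j < w → f.map (σ ^ i) ≠ f.map (σ ^ j) := by
      intro i j hij hjw heq
      have hd : f.map (σ ^ (j - i)) = f := by
        apply Polynomial.map_injective (σ ^ i) (σ ^ i).injective
        rw [Polynomial.map_map]
        have hcmp : (σ ^ i).comp (σ ^ (j - i)) = σ ^ j := by
          rw [← RingHom.mul_def, ← pow_add]
          congr 1
          omega
        rw [hcmp, ← heq]
      exact hfixf (j - i) (by omega) (by omega) hd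
    intro i hi j hj hij
    rcases lt_or_gt_of_ne hij with h | h
    · exact H i j h hj
    · exact fun e => H j i h hi e.symm
  have hfm : ∀ k : ℕ, (f.map (σ ^ k)).Monic := fun k => hf.map _
  have hfi : ∀ k : ℕ, Irreducible (f.map (σ ^ k)) := by
    intro k
    have hbij : Function.Bijective (σ ^ k : K →+* K) :=
      ⟨(σ ^ k).injective, Finite.injective_iff_surjective.mp (σ ^ k).injective⟩
    let e : K ≃+* K := RingEquiv.ofBijective _ hbij
    have he : f.map (σ ^ k) = Polynomial.mapEquiv e f := rfl
    rw [he]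
    exact (MulEquiv.irreducible_iff (Polynomial.mapEquiv e)).mpr hirr
  -- the product
  set P : K[X] := ∏ k ∈ Finset.range w, f.map (σ ^ k) with hP
  have hiter : ∀ k : ℕ, (fun p : K[X] => p.map σ)^[k] f = f.map (σ ^ k) := by
    intro k
    induction k with
    | zero => simp [pow_zero, RingHom.one_def, Polynomial.map_id]
    | succ k ih =>
      rw [Function.iterate_succ_apply', ih, Polynomial.map_map, pow_succ' σ, RingHom.mul_def]
  have hPgoal : ∏ k ∈ Finset.range w, (fun p : K[X] => p.map σ)^[k] f = P :=
    Finset.prod_congr rfl fun k _ => hiter k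
  have hPmonic : P.Monic := monic_prod_of_monic _ _ fun k _ => hfm k
  have hw' : w - 1 + 1 = w := by omega
  have hPmap : P.map σ = P := by
    rw [hP, Polynomial.map_prod]
    calc ∏ k ∈ Finset.range w, (f.map (σ ^ k)).map σ
        = ∏ k ∈ Finset.range w, f.map (σ ^ (k + 1)) := by
          refine Finset.prod_congr rfl fun k _ => ?_
          rw [Polynomial.map_map, pow_succ' σ, RingHom.mul_def]
      _ = (∏ k ∈ Finset.range (w - 1), f.map (σ ^ (k + 1))) * f.map (σ ^ ((w - 1) + 1)) := by
          rw [← Finset.prod_range_succ, hw']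
      _ = (∏ k ∈ Finset.range (w - 1), f.map (σ ^ (k + 1))) * f.map (σ ^ 0) := by
          rw [hw', hσw, pow_zero]
      _ = ∏ k ∈ Finset.range ((w - 1) + 1), f.map (σ ^ k) :=
          (Finset.prod_range_succ' (fun k => f.map (σ ^ k)) (w - 1)).symm
      _ = ∏ k ∈ Finset.range w, f.map (σ ^ k) := by rw [hw']
  have hPcoeff : ∀ i : ℕ, P.coeff i ∈ Set.range A := by
    intro i
    apply hcoefffix
    have h1 : (P.map σ).coeff i = P.coeff i := by rw [hPmap]
    rw [coeff_map, hσ] at h1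
    exact h1
  obtain ⟨g, hgmap, hgdeg, hgmonic⟩ :=
    Polynomial.lifts_and_degree_eq_and_monic
      ((Polynomial.lifts_iff_coeff_lifts P).mpr hPcoeff) hPmonic
  have hfdeg : 0 < f.natDegree := hirr.natDegree_pos
  have hPdeg : P.natDegree = w * f.natDegree := by
    rw [hP, natDegree_prod _ _ fun k _ => (hfm k).ne_zero]
    rw [Finset.sum_congr rfl fun k _ => (hf.natDegree_map (σ ^ k) : _)]
    rw [Finset.sum_const, Finset.card_range, smul_eq_mul]
  have hgPdeg : g.natDegree = P.natDegree := by
    rw [← hgmap, natDegree_map_eq_of_injective A.injective]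
  -- every nonunit divisor of g is divisible by P after mapping to K
  have hmain : ∀ a : F[X], a ∣ g → ¬ IsUnit a → P ∣ a.map A := by
    intro a hag hau
    have hgne : g ≠ 0 := hgmonic.ne_zero
    have hane : a ≠ 0 := by
      rintro rfl
      exact hgne (zero_dvd_iff.mp hag)
    have hAne : a.map A ≠ 0 := (Polynomial.map_ne_zero_iff A.injective).mpr hane
    have hAnu : ¬ IsUnit (a.map A) := by
      intro hu
      have h0 := Polynomial.natDegree_eq_zero_of_isUnit hu
      rw [natDegree_map_eq_of_injective A.injective] at h0
      have ha0 : a.coeff 0 ≠ 0 := by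
        intro hc
        apply hane
        rw [Polynomial.eq_C_of_natDegree_eq_zero h0, hc, map_zero]
      apply hau
      rw [Polynomial.eq_C_of_natDegree_eq_zero h0]
      exact isUnit_C.mpr (Ne.isUnit ha0)
    obtain ⟨r, hr, hra⟩ := WfDvdMonoid.exists_irreducible_factor hAnu hAne
    have hAg : a.map A ∣ P := by
      rw [← hgmap]
      exact Polynomial.map_dvd A hag
    have hrP : r ∣ P := hra.trans hAg
    rw [hP] at hrP
    obtain ⟨k, hk, hkdvd⟩ :=
      (UniqueFactorizationMonoid.irreducible_iff_prime.mp hr).exists_mem_finset_dvd hrP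
    rw [Finset.mem_range] at hk
    have hkA : f.map (σ ^ k) ∣ a.map A :=
      ((hr.associated_of_dvd (hfi k) hkdvd).symm.dvd).trans hra
    have hAfix : ∀ m : ℕ, (a.map A).map (σ ^ m) = a.map A := by
      intro m; rw [Polynomial.map_map, hAcomp m]
    have hall : ∀ j, j < w → f.map (σ ^ j) ∣ a.map A := by
      intro j hj
      obtain ⟨m, hmk⟩ : ∃ m : ℕ, (m + k) % w = j := by
        rcases le_or_gt k j with h | h
        · exact ⟨j - k, by rw [Nat.sub_add_cancel h, Nat.mod_eq_of_lt hj]⟩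
        · refine ⟨j + w - k, ?_⟩
          rw [(by omega : j + w - k + k = j + w), Nat.add_mod_right, Nat.mod_eq_of_lt hj]
      have hdvd2 : (f.map (σ ^ k)).map (σ ^ m) ∣ (a.map A).map (σ ^ m) :=
        Polynomial.map_dvd _ hkA
      rw [hAfix, Polynomial.map_map, ← RingHom.mul_def, ← pow_add, hmod (m + k), hmk] at hdvd2
      exact hdvd2
    have hcopr : (↑(Finset.range w) : Set ℕ).Pairwise
        (Function.onFun IsCoprime fun k => f.map (σ ^ k)) := by
      intro i hi j hj hij
      simp only [Function.onFun]
      rw [Irreducible.coprime_iff_not_dvd (hfi i)]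
      intro hdvd'
      exact hne i (by simpa using hi) j (by simpa using hj) hij
        (Polynomial.eq_of_monic_of_associated (hfm i) (hfm j)
          ((hfi i).associated_of_dvd (hfi j) hdvd'))
    rw [hP]
    exact Finset.prod_dvd_of_coprime hcopr fun j hj => hall j (Finset.mem_range.mp hj)
  refine ⟨g, by rw [hPgoal, hgmap], ?_⟩
  constructor
  · intro hu
    have h0 := Polynomial.natDegree_eq_zero_of_isUnit hu
    rw [hgPdeg, hPdeg] at h0
    have : 0 < w * f.natDegree := Nat.mul_pos (by omega) hfdeg
    omega
  · intro a b hab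
    by_cases hau : IsUnit a
    · exact Or.inl hau
    · right
      have hgne : g ≠ 0 := hgmonic.ne_zero
      have hane : a ≠ 0 := by
        rintro rfl
        rw [zero_mul] at hab
        exact hgne hab
      have hbne : b ≠ 0 := by
        rintro rfl
        rw [mul_zero] at hab
        exact hgne hab
      have hPA := hmain a ⟨b, hab⟩ hau
      have hadeg : P.natDegree ≤ a.natDegree := by
        have hle := Polynomial.natDegree_le_of_dvd hPA
          ((Polynomial.map_ne_zero_iff A.injective).mpr hane)
        rwa [natDegree_map_eq_of_injective A.injective] at hle
      have hsum : g.natDegree = a.natDegree + b.natDegree := by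
        rw [hab, natDegree_mul hane hbne]
      have hb0 : b.natDegree = 0 := by omega
      have hbc : b.coeff 0 ≠ 0 := by
        intro hc
        apply hbne
        rw [Polynomial.eq_C_of_natDegree_eq_zero hb0, hc, map_zero]
      rw [Polynomial.eq_C_of_natDegree_eq_zero hb0]
      exact isUnit_C.mpr (Ne.isUnit hbc)
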